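/- Let p_LL(β|ψ₁,ψ₂) be the marginal density of β when β|λ ~ N(0,λ²) and λ has the log-Laplace prior with scales ψ₁, ψ₂ > 0. Then for every ψ₁ > 0, p_LL(β|ψ₁,ψ₂) = O(|β|^{−1−1/ψ₂}) as |β| → ∞. -/

import Mathlib

open MeasureTheory Real Set Filter

/-- Marginal density of β for a N(0,λ²) kernel under the log-Laplace prior. -/
noncomputable def logLaplaceMarginal (ψ₁ ψ₂ β : ℝ) : ℝ :=
  ∫ l in Ioi (0 : ℝ),
    (2 * π * l ^ 2) ^ (-(1 : ℝ) / 2) * Real.exp (-β ^ 2 / (2 * l ^ 2)) *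
      (if l ≤ 1 then (1 / (2 * ψ₁)) * l ^ (-1 + 1 / ψ₁)
       else (1 / (2 * ψ₂)) * l ^ (-1 - 1 / ψ₂))

lemma exp_neg_le_one_div' {x : ℝ} (hx : 0 < x) : Real.exp (-x) ≤ 1 / x := by
  rw [Real.exp_neg, one_div]
  exact inv_anti₀ hx (by linarith [Real.add_one_le_exp x])

lemma exp_neg_le_rpow' {s x : ℝ} (hs : 0 < s) (hx : 0 < x) :
    Real.exp (-x) ≤ (s / x) ^ s := by
  have h1 : Real.exp (-x) = Real.exp (-(x / s)) ^ s := by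
    rw [← Real.exp_mul]; congr 1; field_simp
  rw [h1]
  refine Real.rpow_le_rpow (Real.exp_pos _).le ?_ hs.le
  have h := exp_neg_le_one_div' (div_pos hx hs)
  rwa [one_div_div] at h

lemma base_le' {l : ℝ} (hl : 0 < l) : (2 * π * l ^ 2) ^ (-(1 : ℝ) / 2) ≤ l⁻¹ := by
  have h1 : ((l ^ 2 : ℝ)) ^ (-(1 : ℝ) / 2) = l⁻¹ := by
    rw [← Real.rpow_natCast l 2, ← Real.rpow_mul hl.le]
    norm_num [Real.rpow_neg_one]
  calc (2 * π * l ^ 2) ^ (-(1 : ℝ) / 2) ≤ ((l ^ 2 : ℝ)) ^ (-(1 : ℝ) / 2) :=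
        Real.rpow_le_rpow_of_nonpos (by positivity)
          (by nlinarith [Real.pi_gt_three, sq_nonneg l]) (by norm_num)
    _ = l⁻¹ := h1

set_option maxHeartbeats 2000000

/-- Tail behaviour of the log-Laplace marginal: for every ψ₁ > 0, as
|β| → ∞ the marginal is O(|β|^{−1−1/ψ₂}). -/
theorem log_laplace_marginal_tail (ψ₁ ψ₂ : ℝ) (h₁ : 0 < ψ₁) (h₂ : 0 < ψ₂) :
    (fun β => logLaplaceMarginal ψ₁ ψ₂ β) =O[cocompact ℝ]
      fun β => |β| ^ (-1 - 1 / ψ₂) := by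
  set q : ℝ := 1 + 1/ψ₂ with hqdef
  have hq0 : (0:ℝ) < q := by rw [hqdef]; positivity
  rw [Asymptotics.isBigO_iff]
  refine ⟨(2/ψ₁) * (4*q)^q + (1/(2*ψ₂*q)) * (2*q)^q + 1/(2*ψ₂*q), ?_⟩
  have hev : ∀ᶠ β : ℝ in cocompact ℝ, 1 ≤ |β| := by
    have h := tendsto_norm_cocompact_atTop (E := ℝ)
    simpa [Real.norm_eq_abs] using h.eventually_ge_atTop 1
  filter_upwards [hev] with β hβ
  set a : ℝ := |β| with hadef
  have ha0 : (0:ℝ) < a := lt_of_lt_of_le one_pos hβ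
  have hb2 : β ^ 2 = a ^ 2 := (sq_abs β).symm
  have hb1 : (1:ℝ) ≤ β ^ 2 := by rw [hb2]; nlinarith
  set F : ℝ → ℝ := fun l =>
    (2 * π * l ^ 2) ^ (-(1 : ℝ) / 2) * Real.exp (-β ^ 2 / (2 * l ^ 2)) *
      (if l ≤ 1 then (1 / (2 * ψ₁)) * l ^ (-1 + 1 / ψ₁)
       else (1 / (2 * ψ₂)) * l ^ (-1 - 1 / ψ₂)) with hF
  set K₁ : ℝ := (2/ψ₁) * Real.exp (-β^2/4) with hK1
  set K₂ : ℝ := (1/(2*ψ₂)) * (2*q)^q * a ^ (-(2*q)) with hK2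
  set K₃ : ℝ := 1/(2*ψ₂) with hK3
  have hK10 : 0 ≤ K₁ := by rw [hK1]; positivity
  have hK20 : 0 ≤ K₂ := by
    rw [hK2]
    have : (0:ℝ) ≤ a ^ (-(2*q)) := Real.rpow_nonneg ha0.le _
    positivity
  have hK30 : 0 ≤ K₃ := by rw [hK3]; positivity
  -- nonnegativity of the integrand
  have hf_nonneg : ∀ l : ℝ, l ∈ Ioi (0:ℝ) → 0 ≤ F l := by
    intro l hl
    rw [hF]
    have h0 : (0:ℝ) ≤ (2*π*l^2) ^ (-(1:ℝ)/2) := Real.rpow_nonneg (by positivity) _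
    have hl' : (0:ℝ) < l := hl
    dsimp only
    split_ifs <;> positivity
  -- piece 1 : 0 < l ≤ 1
  have hp1 : ∀ l : ℝ, 0 < l → l ≤ 1 → F l ≤ K₁ * l ^ (1/ψ₁) := by
    intro l hl hl1
    have hexp : Real.exp (-β^2/(2*l^2)) ≤ Real.exp (-β^2/4) * (4*l^2) := by
      have e1 : -β^2/(2*l^2) ≤ -β^2/4 + -1/(4*l^2) := by
        have key : -β^2/4 + -1/(4*l^2) - (-β^2/(2*l^2)) = (2*β^2 - β^2*l^2 - 1)/(4*l^2) := by
          field_simp; ring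
        have hnum : 0 ≤ 2*β^2 - β^2*l^2 - 1 := by
          nlinarith [mul_nonneg (sq_nonneg β) (by nlinarith : (0:ℝ) ≤ 1 - l^2)]
        have h2 : 0 ≤ (2*β^2 - β^2*l^2 - 1)/(4*l^2) := div_nonneg hnum (by positivity)
        linarith [key ▸ h2]
      calc Real.exp (-β^2/(2*l^2)) ≤ Real.exp (-β^2/4 + -1/(4*l^2)) := Real.exp_le_exp.mpr e1
        _ = Real.exp (-β^2/4) * Real.exp (-1/(4*l^2)) := Real.exp_add _ _
        _ ≤ Real.exp (-β^2/4) * (4*l^2) := by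
            have h := exp_neg_le_one_div' (x := 1/(4*l^2)) (by positivity)
            rw [one_div_one_div] at h
            have h' : Real.exp (-1/(4*l^2)) ≤ 4*l^2 := by
              rw [show (-1:ℝ)/(4*l^2) = -(1/(4*l^2)) by ring]; exact h
            exact mul_le_mul_of_nonneg_left h' (Real.exp_pos _).le
    have hcomb : l⁻¹ * (4*l^2) * l ^ (-1 + 1/ψ₁) = 4 * l ^ (1/ψ₁) := by
      rw [← Real.rpow_neg_one l]
      rw [show (4:ℝ) * l^2 = 4 * l ^ ((2:ℕ):ℝ) by rw [Real.rpow_natCast]]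
      rw [show l ^ (-1:ℝ) * (4 * l ^ ((2:ℕ):ℝ)) = 4 * (l ^ (-1:ℝ) * l ^ ((2:ℕ):ℝ)) by ring]
      rw [← Real.rpow_add hl, mul_assoc, ← Real.rpow_add hl]
      norm_num
    have hb := base_le' hl
    calc F l = (2*π*l^2) ^ (-(1:ℝ)/2) * Real.exp (-β^2/(2*l^2)) * ((1/(2*ψ₁)) * l ^ (-1 + 1/ψ₁)) := by
          rw [hF]; simp only [if_pos hl1]
      _ ≤ l⁻¹ * (Real.exp (-β^2/4) * (4*l^2)) * ((1/(2*ψ₁)) * l ^ (-1 + 1/ψ₁)) := by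
          have hw : (0:ℝ) ≤ (1/(2*ψ₁)) * l ^ (-1 + 1/ψ₁) := by positivity
          refine mul_le_mul (mul_le_mul hb hexp (Real.exp_pos _).le (by positivity)) le_rfl hw ?_
          positivity
      _ = K₁ * l ^ (1/ψ₁) := by
          rw [hK1]
          have : l⁻¹ * (Real.exp (-β^2/4) * (4*l^2)) * ((1/(2*ψ₁)) * l ^ (-1 + 1/ψ₁))
              = Real.exp (-β^2/4) * (1/(2*ψ₁)) * (l⁻¹ * (4*l^2) * l ^ (-1 + 1/ψ₁)) := by ring
          rw [this, hcomb]
          field_simp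
          ring
  -- piece 2 : 1 < l
  have hp2 : ∀ l : ℝ, 1 < l → F l ≤ K₂ * l ^ (1/ψ₂) := by
    intro l hl1
    have hl : (0:ℝ) < l := lt_trans one_pos hl1
    have hx : (0:ℝ) < β^2/(2*l^2) := div_pos (by nlinarith) (by positivity)
    have hexp : Real.exp (-β^2/(2*l^2)) ≤ (2*q)^q * a ^ (-(2*q)) * l ^ (2*q) := by
      have h0 := exp_neg_le_rpow' hq0 hx
      rw [neg_div]
      have heq : q / (β^2/(2*l^2)) = 2*q*l^2/a^2 := by
        rw [hb2]; field_simp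
      rw [heq] at h0
      refine h0.trans (le_of_eq ?_)
      rw [Real.div_rpow (by positivity) (by positivity), Real.mul_rpow (by positivity) (by positivity)]
      rw [show (l:ℝ)^2 = l ^ ((2:ℕ):ℝ) by rw [Real.rpow_natCast],
          show (a:ℝ)^2 = a ^ ((2:ℕ):ℝ) by rw [Real.rpow_natCast],
          ← Real.rpow_mul hl.le, ← Real.rpow_mul ha0.le]
      rw [div_eq_mul_inv, ← Real.rpow_neg ha0.le]
      push_cast
      ring_nf
    have hcomb : l⁻¹ * l ^ (2*q) * l ^ (-1 - 1/ψ₂) = l ^ (1/ψ₂) := by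
      rw [← Real.rpow_neg_one l, ← Real.rpow_add hl, ← Real.rpow_add hl]
      congr 1
      rw [hqdef]; ring
    have hb := base_le' hl
    calc F l = (2*π*l^2) ^ (-(1:ℝ)/2) * Real.exp (-β^2/(2*l^2)) * ((1/(2*ψ₂)) * l ^ (-1 - 1/ψ₂)) := by
          rw [hF]; simp only [if_neg (not_le.mpr hl1)]; rfl
      _ ≤ l⁻¹ * ((2*q)^q * a ^ (-(2*q)) * l ^ (2*q)) * ((1/(2*ψ₂)) * l ^ (-1 - 1/ψ₂)) := by
          have hw : (0:ℝ) ≤ (1/(2*ψ₂)) * l ^ (-1 - 1/ψ₂) := by positivity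
          refine mul_le_mul (mul_le_mul hb hexp (Real.exp_pos _).le (by positivity)) le_rfl hw ?_
          have h2 : (0:ℝ) ≤ a ^ (-(2*q)) := Real.rpow_nonneg ha0.le _
          positivity
      _ = K₂ * l ^ (1/ψ₂) := by
          rw [hK2, ← hcomb]; ring
  -- piece 3 : 1 < l (used for a < l)
  have hp3 : ∀ l : ℝ, 1 < l → F l ≤ K₃ * l ^ (-1 - q) := by
    intro l hl1
    have hl : (0:ℝ) < l := lt_trans one_pos hl1
    have hexp : Real.exp (-β^2/(2*l^2)) ≤ 1 := by
      rw [← Real.exp_zero]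
      refine Real.exp_le_exp.mpr ?_
      rw [neg_div]
      exact neg_nonpos.mpr (by positivity)
    have hcomb : l⁻¹ * l ^ (-1 - 1/ψ₂) = l ^ (-1 - q) := by
      rw [← Real.rpow_neg_one l, ← Real.rpow_add hl]
      congr 1
      rw [hqdef]; ring
    have hb := base_le' hl
    calc F l = (2*π*l^2) ^ (-(1:ℝ)/2) * Real.exp (-β^2/(2*l^2)) * ((1/(2*ψ₂)) * l ^ (-1 - 1/ψ₂)) := by
          rw [hF]; simp only [if_neg (not_le.mpr hl1)]; rfl
      _ ≤ l⁻¹ * 1 * ((1/(2*ψ₂)) * l ^ (-1 - 1/ψ₂)) := by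
          have hw : (0:ℝ) ≤ (1/(2*ψ₂)) * l ^ (-1 - 1/ψ₂) := by positivity
          refine mul_le_mul (mul_le_mul hb hexp (Real.exp_pos _).le (by positivity)) le_rfl hw ?_
          positivity
      _ = K₃ * l ^ (-1 - q) := by rw [hK3, ← hcomb]; ring
  -- integrability of the bounding pieces
  have hmeas1 : MeasurableSet (Ioc (0:ℝ) 1) := measurableSet_Ioc
  have hmeas2 : MeasurableSet (Ioc (1:ℝ) a) := measurableSet_Ioc
  have hmeas3 : MeasurableSet (Ioi a) := measurableSet_Ioi
  have hr1 : (-1:ℝ) < 1/ψ₁ := by linarith [one_div_pos.mpr h₁]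
  have hr2 : (-1:ℝ) < 1/ψ₂ := by linarith [one_div_pos.mpr h₂]
  have hi1 : IntegrableOn (fun l : ℝ => K₁ * l ^ (1/ψ₁)) (Ioc (0:ℝ) 1) volume := by
    rw [← intervalIntegrable_iff_integrableOn_Ioc_of_le zero_le_one]
    exact (intervalIntegral.intervalIntegrable_rpow' hr1).const_mul _
  have hi2 : IntegrableOn (fun l : ℝ => K₂ * l ^ (1/ψ₂)) (Ioc (1:ℝ) a) volume := by
    rw [← intervalIntegrable_iff_integrableOn_Ioc_of_le hβ]
    exact (intervalIntegral.intervalIntegrable_rpow' hr2).const_mul _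
  have hi3 : IntegrableOn (fun l : ℝ => K₃ * l ^ (-1-q)) (Ioi a) volume :=
    (integrableOn_Ioi_rpow_of_lt (by linarith) ha0).const_mul _
  set G : ℝ → ℝ := fun l =>
    (Ioc (0:ℝ) 1).indicator (fun l => K₁ * l ^ (1/ψ₁)) l
    + (Ioc (1:ℝ) a).indicator (fun l => K₂ * l ^ (1/ψ₂)) l
    + (Ioi a).indicator (fun l => K₃ * l ^ (-1-q)) l with hG
  have hG1 : Integrable ((Ioc (0:ℝ) 1).indicator (fun l => K₁ * l ^ (1/ψ₁)))
      (volume.restrict (Ioi (0:ℝ))) :=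
    (hi1.integrable_indicator hmeas1).mono_measure Measure.restrict_le_self
  have hG2 : Integrable ((Ioc (1:ℝ) a).indicator (fun l => K₂ * l ^ (1/ψ₂)))
      (volume.restrict (Ioi (0:ℝ))) :=
    (hi2.integrable_indicator hmeas2).mono_measure Measure.restrict_le_self
  have hG3 : Integrable ((Ioi a).indicator (fun l => K₃ * l ^ (-1-q)))
      (volume.restrict (Ioi (0:ℝ))) :=
    (hi3.integrable_indicator hmeas3).mono_measure Measure.restrict_le_self
  have hGint : Integrable G (volume.restrict (Ioi (0:ℝ))) := (hG1.add hG2).add hG3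
  -- pointwise nonnegativity of each indicator
  have hind1 : ∀ l : ℝ, 0 ≤ (Ioc (0:ℝ) 1).indicator (fun l => K₁ * l ^ (1/ψ₁)) l :=
    fun l => Set.indicator_nonneg
      (fun x hx => mul_nonneg hK10 (Real.rpow_nonneg hx.1.le _)) l
  have hind2 : ∀ l : ℝ, 0 ≤ (Ioc (1:ℝ) a).indicator (fun l => K₂ * l ^ (1/ψ₂)) l :=
    fun l => Set.indicator_nonneg
      (fun x hx => mul_nonneg hK20 (Real.rpow_nonneg (le_trans zero_le_one hx.1.le) _)) l
  have hind3 : ∀ l : ℝ, 0 ≤ (Ioi a).indicator (fun l => K₃ * l ^ (-1-q)) l :=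
    fun l => Set.indicator_nonneg
      (fun x hx => mul_nonneg hK30 (Real.rpow_nonneg (le_trans ha0.le (le_of_lt hx)) _)) l
  -- F ≤ G a.e. on Ioi 0
  have hFG : F ≤ᵐ[volume.restrict (Ioi (0:ℝ))] G := by
    rw [Filter.EventuallyLE, ae_restrict_iff' measurableSet_Ioi]
    refine ae_of_all _ (fun l hl => ?_)
    have hl0 : (0:ℝ) < l := hl
    rw [hG]
    dsimp only
    rcases le_or_gt l 1 with hle1 | hgt1
    · rw [Set.indicator_of_mem (show l ∈ Ioc (0:ℝ) 1 from ⟨hl0, hle1⟩)]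
      linarith [hp1 l hl0 hle1, hind2 l, hind3 l]
    · rcases le_or_gt l a with hla | hla
      · rw [Set.indicator_of_mem (show l ∈ Ioc (1:ℝ) a from ⟨hgt1, hla⟩)]
        linarith [hp2 l hgt1, hind1 l, hind3 l]
      · rw [Set.indicator_of_mem (show l ∈ Ioi a from hla)]
        linarith [hp3 l hgt1, hind1 l, hind2 l]
  have hmarg : logLaplaceMarginal ψ₁ ψ₂ β = ∫ l in Ioi (0:ℝ), F l := by
    unfold logLaplaceMarginal
    rw [hF]
  have hmono : logLaplaceMarginal ψ₁ ψ₂ β ≤ ∫ l in Ioi (0:ℝ), G l := by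
    rw [hmarg]
    exact integral_mono_of_nonneg
      ((ae_restrict_iff' measurableSet_Ioi).mpr (ae_of_all _ hf_nonneg)) hGint hFG
  -- splitting the integral of G
  have hsub1 : Ioc (0:ℝ) 1 ∩ Ioi (0:ℝ) = Ioc (0:ℝ) 1 :=
    inter_eq_left.mpr (fun x hx => hx.1)
  have hsub2 : Ioc (1:ℝ) a ∩ Ioi (0:ℝ) = Ioc (1:ℝ) a :=
    inter_eq_left.mpr (fun x hx => lt_trans zero_lt_one hx.1)
  have hsub3 : Ioi a ∩ Ioi (0:ℝ) = Ioi a :=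
    inter_eq_left.mpr (fun x hx => lt_trans ha0 hx)
  have h12 : Integrable (fun l : ℝ =>
      (Ioc (0:ℝ) 1).indicator (fun l => K₁ * l ^ (1/ψ₁)) l
      + (Ioc (1:ℝ) a).indicator (fun l => K₂ * l ^ (1/ψ₂)) l)
      (volume.restrict (Ioi (0:ℝ))) := hG1.add hG2
  have j1 : (∫ l in Ioi (0:ℝ), (Ioc (0:ℝ) 1).indicator (fun l => K₁ * l ^ (1/ψ₁)) l)
      = ∫ l in Ioc (0:ℝ) 1, K₁ * l ^ (1/ψ₁) := by
    rw [integral_indicator hmeas1, Measure.restrict_restrict hmeas1, hsub1]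
  have j2 : (∫ l in Ioi (0:ℝ), (Ioc (1:ℝ) a).indicator (fun l => K₂ * l ^ (1/ψ₂)) l)
      = ∫ l in Ioc (1:ℝ) a, K₂ * l ^ (1/ψ₂) := by
    rw [integral_indicator hmeas2, Measure.restrict_restrict hmeas2, hsub2]
  have j3 : (∫ l in Ioi (0:ℝ), (Ioi a).indicator (fun l => K₃ * l ^ (-1-q)) l)
      = ∫ l in Ioi a, K₃ * l ^ (-1-q) := by
    rw [integral_indicator hmeas3, Measure.restrict_restrict hmeas3, hsub3]
  have hsplit : (∫ l in Ioi (0:ℝ), G l)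
      = (∫ l in Ioc (0:ℝ) 1, K₁ * l ^ (1/ψ₁)) + (∫ l in Ioc (1:ℝ) a, K₂ * l ^ (1/ψ₂))
        + (∫ l in Ioi a, K₃ * l ^ (-1-q)) := by
    have e1 : (∫ l in Ioi (0:ℝ), G l)
        = (∫ l in Ioi (0:ℝ),
            ((Ioc (0:ℝ) 1).indicator (fun l => K₁ * l ^ (1/ψ₁)) l
             + (Ioc (1:ℝ) a).indicator (fun l => K₂ * l ^ (1/ψ₂)) l))
          + ∫ l in Ioi (0:ℝ), (Ioi a).indicator (fun l => K₃ * l ^ (-1-q)) l :=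
      integral_add h12 hG3
    have e2 : (∫ l in Ioi (0:ℝ),
          ((Ioc (0:ℝ) 1).indicator (fun l => K₁ * l ^ (1/ψ₁)) l
           + (Ioc (1:ℝ) a).indicator (fun l => K₂ * l ^ (1/ψ₂)) l))
        = (∫ l in Ioi (0:ℝ), (Ioc (0:ℝ) 1).indicator (fun l => K₁ * l ^ (1/ψ₁)) l)
          + ∫ l in Ioi (0:ℝ), (Ioc (1:ℝ) a).indicator (fun l => K₂ * l ^ (1/ψ₂)) l :=
      integral_add hG1 hG2
    rw [e1, e2, j1, j2, j3]
  -- values / bounds of the three integrals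
  have hI1 : (∫ l in Ioc (0:ℝ) 1, K₁ * l ^ (1/ψ₁)) ≤ K₁ := by
    rw [← intervalIntegral.integral_of_le zero_le_one, intervalIntegral.integral_const_mul,
      integral_rpow (Or.inl hr1), Real.one_rpow,
      Real.zero_rpow (by positivity : (0:ℝ) < 1/ψ₁ + 1).ne']
    have h : (1 - 0) / (1/ψ₁ + 1) ≤ (1:ℝ) := by
      rw [sub_zero, div_le_one (by positivity)]
      have : (0:ℝ) < 1/ψ₁ := by positivity
      linarith
    calc K₁ * ((1 - 0) / (1/ψ₁ + 1)) ≤ K₁ * 1 := mul_le_mul_of_nonneg_left h hK10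
      _ = K₁ := mul_one _
  have hI2 : (∫ l in Ioc (1:ℝ) a, K₂ * l ^ (1/ψ₂)) ≤ K₂ * (a ^ q / q) := by
    rw [← intervalIntegral.integral_of_le hβ, intervalIntegral.integral_const_mul,
      integral_rpow (Or.inl hr2)]
    have h1 : 1/ψ₂ + 1 = q := by rw [hqdef]; ring
    rw [h1, Real.one_rpow]
    have h : (a ^ q - 1) / q ≤ a ^ q / q := by gcongr <;> linarith
    exact mul_le_mul_of_nonneg_left h hK20
  have hI3 : (∫ l in Ioi a, K₃ * l ^ (-1-q)) = K₃ * (a ^ (-q) / q) := by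
    rw [MeasureTheory.integral_const_mul,
      integral_Ioi_rpow_of_lt (show (-1-q:ℝ) < -1 by linarith) ha0,
      show (-1-q+1 : ℝ) = -q by ring, neg_div_neg_eq]
  -- bounds on the three coefficients
  have hT1 : K₁ ≤ (2/ψ₁) * (4*q)^q * a ^ (-q) := by
    have hx4 : (0:ℝ) < β^2/4 := by nlinarith
    have h0 := exp_neg_le_rpow' hq0 hx4
    have heq : q / (β^2/4) = 4*q/a^2 := by
      rw [hb2]; field_simp
    rw [heq] at h0
    have h1 : ((4*q)/a^2 : ℝ) ^ q = (4*q)^q * a ^ (-(2*q)) := by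
      rw [Real.div_rpow (by positivity) (by positivity),
        show (a:ℝ)^2 = a ^ ((2:ℕ):ℝ) by rw [Real.rpow_natCast],
        ← Real.rpow_mul ha0.le, div_eq_mul_inv, ← Real.rpow_neg ha0.le]
      push_cast
      ring_nf
    have h2 : a ^ (-(2*q)) ≤ a ^ (-q) := Real.rpow_le_rpow_of_exponent_le hβ (by linarith)
    have h3 : Real.exp (-β^2/4) ≤ (4*q)^q * a ^ (-q) := by
      rw [show -β^2/4 = -(β^2/4) by ring]
      rw [h1] at h0
      exact h0.trans (mul_le_mul_of_nonneg_left h2 (by positivity))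
    calc K₁ = (2/ψ₁) * Real.exp (-β^2/4) := hK1
      _ ≤ (2/ψ₁) * ((4*q)^q * a ^ (-q)) := mul_le_mul_of_nonneg_left h3 (by positivity)
      _ = (2/ψ₁) * (4*q)^q * a ^ (-q) := by ring
  have haq : a ^ (-(2*q)) * a ^ q = a ^ (-q) := by
    rw [← Real.rpow_add ha0]; congr 1; ring
  have hT2 : K₂ * (a ^ q / q) = (1/(2*ψ₂*q)) * (2*q)^q * a ^ (-q) := by
    rw [hK2, hK3]
    calc 1/(2*ψ₂) * (2*q)^q * a ^ (-(2*q)) * (a ^ q / q)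
        = (1/(2*ψ₂)/q) * (2*q)^q * (a ^ (-(2*q)) * a ^ q) := by ring
      _ = (1/(2*ψ₂)/q) * (2*q)^q * a ^ (-q) := by rw [haq]
      _ = (1/(2*ψ₂*q)) * (2*q)^q * a ^ (-q) := by rw [div_div]
  have hT3 : K₃ * (a ^ (-q) / q) = (1/(2*ψ₂*q)) * a ^ (-q) := by
    rw [hK3]; field_simp
  -- final assembly
  have hnn : 0 ≤ logLaplaceMarginal ψ₁ ψ₂ β := by
    rw [hmarg]
    exact setIntegral_nonneg measurableSet_Ioi hf_nonneg
  rw [Real.norm_eq_abs, Real.norm_eq_abs, abs_of_nonneg hnn,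
    abs_of_nonneg (Real.rpow_nonneg (abs_nonneg β) _),
    show (-1 - 1/ψ₂ : ℝ) = -q by rw [hqdef]; ring]
  calc logLaplaceMarginal ψ₁ ψ₂ β ≤ ∫ l in Ioi (0:ℝ), G l := hmono
    _ = (∫ l in Ioc (0:ℝ) 1, K₁ * l ^ (1/ψ₁)) + (∫ l in Ioc (1:ℝ) a, K₂ * l ^ (1/ψ₂))
        + (∫ l in Ioi a, K₃ * l ^ (-1-q)) := hsplit
    _ ≤ K₁ + K₂ * (a ^ q / q) + K₃ * (a ^ (-q) / q) :=
        add_le_add (add_le_add hI1 hI2) (le_of_eq hI3)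
    _ ≤ (2/ψ₁) * (4*q)^q * a ^ (-q) + (1/(2*ψ₂*q)) * (2*q)^q * a ^ (-q)
        + (1/(2*ψ₂*q)) * a ^ (-q) := by
        rw [hT2, hT3]
        exact add_le_add (add_le_add hT1 le_rfl) le_rfl
    _ = ((2/ψ₁) * (4*q)^q + (1/(2*ψ₂*q)) * (2*q)^q + 1/(2*ψ₂*q)) * a ^ (-q) := by ring
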